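/- Let m ≥ 2, α = [0; overline{1,m}], and let S_α(n) = ∑_{i≥0} ε_i(n) and S_{α,k}(n) = ∑_{0≤i<k} ε_i(n) be the full and truncated sum-of-digits functions of the Ostrowski representation n = ∑_i ε_i(n)·q_i. Then for all integers N ≥ 0, k ≥ 2, r ≥ 0: the number of n < N with S_α(n+r) − S_α(n) ≠ S_{α,k}(n+r) − S_{α,k}(n) is at most N·r/q_{k−1}. -/

import Mathlib

open Finset
open scoped Classical

/-- e(x) = exp(2πi x) -/
noncomputable def e (x : ℝ) : ℂ := Complex.exp (2 * Real.pi * Complex.I * x)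

/-- Denominators of α = [0; 1, m, 1, m, ...]. -/
def ostq (m : ℕ) : ℕ → ℕ
  | 0 => 1
  | 1 => 1
  | (i+2) => (if (i+2) % 2 = 0 then m * ostq m (i+1) else ostq m (i+1)) + ostq m i

/-- φ(m) = (m + 2 + √(m² + 4m))/2. -/
noncomputable def phi (m : ℕ) : ℝ := ((m : ℝ) + 2 + Real.sqrt ((m : ℝ)^2 + 4*m)) / 2

/-- Partial quotients of α = [0; 1, m, 1, m, ...] : a_j = m if j even, 1 if j odd. -/
def pq (m j : ℕ) : ℕ := if j % 2 = 0 then m else 1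

/-- Markov condition on digit sequences. -/
def Markov (m : ℕ) (ε : ℕ → ℕ) : Prop :=
  ε 0 < pq m 1 ∧ ∀ i, 1 ≤ i → ε i ≤ pq m (i+1) ∧ (ε i = pq m (i+1) → ε (i-1) = 0)

lemma ostq_rec (m i : ℕ) : ostq m (i+2) = pq m (i+2) * ostq m (i+1) + ostq m i := by
  show (if (i+2) % 2 = 0 then m * ostq m (i+1) else ostq m (i+1)) + ostq m i = _
  unfold pq; split <;> simp

lemma pq_pos (m : ℕ) (hm : 2 ≤ m) (j : ℕ) : 1 ≤ pq m j := by unfold pq; split <;> omega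

lemma pq_one (m : ℕ) : pq m 1 = 1 := rfl

lemma ostq_pos (m : ℕ) : ∀ i, 0 < ostq m i
  | 0 => Nat.one_pos
  | 1 => Nat.one_pos
  | (i+2) => by rw [ostq_rec]; have := ostq_pos m i; omega

lemma ostq_le_succ (m : ℕ) (hm : 2 ≤ m) : ∀ i, ostq m i ≤ ostq m (i+1)
  | 0 => le_refl 1
  | (i+1) => by
      rw [ostq_rec]
      have h1 := ostq_pos m (i+1)
      have h2 := ostq_pos m i
      have h3 := pq_pos m hm (i+2)
      nlinarith

lemma ostq_mono (m : ℕ) (hm : 2 ≤ m) {i j : ℕ} (h : i ≤ j) : ostq m i ≤ ostq m j :=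
  monotone_nat_of_le_succ (ostq_le_succ m hm) h

lemma ostq_ge (m : ℕ) (hm : 2 ≤ m) : ∀ i, i ≤ ostq m (i+1)
  | 0 => Nat.one_pos.le
  | (i+1) => by
      rw [ostq_rec]
      have h1 := ostq_ge m hm i
      have h2 := ostq_pos m i
      have h3 := pq_pos m hm (i+2)
      nlinarith

lemma eps0 (m : ℕ) (ε : ℕ → ℕ) (hε : Markov m ε) : ε 0 = 0 := by
  have := hε.1; rw [pq_one] at this; omega

lemma head_lt (m : ℕ) (hm : 2 ≤ m) (ε : ℕ → ℕ) (hε : Markov m ε) :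
    ∀ k, ∑ i ∈ range k, ε i * ostq m i < ostq m k := by
  intro k
  induction k using Nat.strong_induction_on with
  | _ k ih =>
    match k with
    | 0 => simpa using ostq_pos m 0
    | 1 => simpa [eps0 m ε hε] using ostq_pos m 1
    | (k+2) =>
      have hrec := ostq_rec m k
      have hb : ε (k+1) ≤ pq m (k+2) := (hε.2 (k+1) (by omega)).1
      have himp : ε (k+1) = pq m (k+2) → ε k = 0 := fun h => by
        simpa using (hε.2 (k+1) (by omega)).2 h
      rcases eq_or_lt_of_le hb with heq | hlt
      · have h0 : ε k = 0 := himp heq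
        have hk := ih k (by omega)
        rw [Finset.sum_range_succ, Finset.sum_range_succ, h0, heq, zero_mul, hrec]
        omega
      · have hk1 := ih (k+1) (by omega)
        have hq1 := ostq_pos m (k+1)
        have hq0 := ostq_pos m k
        have hp : 1 ≤ pq m (k+2) := pq_pos m hm (k+2)
        have hmul : ε (k+1) * ostq m (k+1) ≤ (pq m (k+2) - 1) * ostq m (k+1) :=
          Nat.mul_le_mul_right _ (by omega)
        have hsub : (pq m (k+2) - 1) * ostq m (k+1) = pq m (k+2) * ostq m (k+1) - ostq m (k+1) :=
          by rw [Nat.sub_one_mul]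
        have hge : ostq m (k+1) ≤ pq m (k+2) * ostq m (k+1) := Nat.le_mul_of_pos_left _ hp
        rw [Finset.sum_range_succ, hrec]
        omega

/-- ε is the (finitely supported) Ostrowski digit sequence of n. -/
def IsOstRep (m n : ℕ) (ε : ℕ → ℕ) : Prop :=
  Markov m ε ∧ ∃ K, (∀ j, K ≤ j → ε j = 0) ∧ n = ∑ i ∈ Finset.range K, ε i * ostq m i

lemma exists_rep (m : ℕ) (hm : 2 ≤ m) :
    ∀ n, ∃ ε, IsOstRep m n ε ∧ ∀ i, ε i ≠ 0 → ostq m i ≤ n := by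
  intro n
  induction n using Nat.strong_induction_on with
  | _ n ih =>
    rcases Nat.eq_zero_or_pos n with rfl | hn
    · exact ⟨fun _ => 0, ⟨⟨by simp [pq_one], fun i hi => ⟨Nat.zero_le _, fun _ => rfl⟩⟩,
        0, fun j _ => rfl, by simp⟩, fun i hi => absurd rfl hi⟩
    · set P : ℕ → Prop := fun j => ostq m j ≤ n with hP
      have hP1 : P 1 := hn
      set j := Nat.findGreatest P (n+1) with hj
      have hj1 : 1 ≤ j := Nat.le_findGreatest (by omega) hP1
      have hjn : ostq m j ≤ n := Nat.findGreatest_spec (m := 1) (by omega) hP1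
      have hjtop : n < ostq m (j+1) := by
        by_contra hcon
        push_neg at hcon
        have hle : j ≤ n := le_trans (ostq_ge m hm j) hcon
        exact Nat.findGreatest_is_greatest (P := P) (n := n+1) (k := j+1)
          (by omega) (by omega) hcon
      clear_value j
      clear hP1 hj
      obtain ⟨j', rfl⟩ : ∃ j', j = j' + 1 := ⟨j - 1, by omega⟩
      have hjtop : n < ostq m (j'+2) := hjtop
      have hjn : ostq m (j'+1) ≤ n := hjn
      have hq := ostq_pos m (j'+1)
      have hq' := ostq_pos m j'
      set d := n / ostq m (j'+1) with hd
      set rem := n % ostq m (j'+1) with hremdef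
      have hdr : d * ostq m (j'+1) + rem = n := by rw [hd, hremdef, Nat.mul_comm]; exact Nat.div_add_mod n _
      have hrem_lt : rem < ostq m (j'+1) := Nat.mod_lt _ hq
      clear_value d rem
      clear hd hremdef
      have hrem_n : rem < n := by omega
      obtain ⟨ε', ⟨hM', K', hK', hsum'⟩, hsupp'⟩ := ih rem hrem_n
      have hsupp'' : ∀ i, ε' i ≠ 0 → i < j'+1 := by
        intro i hi
        by_contra h
        push_neg at h
        have := le_trans (ostq_mono m hm h) (hsupp' i hi)
        omega
      have hεj0 : ε' (j'+1) = 0 := by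
        by_contra h; have := hsupp'' _ h; omega
      have hrec2 : ostq m (j'+2) = pq m (j'+2) * ostq m (j'+1) + ostq m j' := ostq_rec m j'
      have hmono : ostq m j' ≤ ostq m (j'+1) := ostq_le_succ m hm j'
      have hdle : d ≤ pq m (j'+2) := by
        by_contra h
        push_neg at h
        have h2 : pq m (j'+2) * ostq m (j'+1) + ostq m (j'+1) ≤ d * ostq m (j'+1) := by
          have := Nat.mul_le_mul_right (ostq m (j'+1)) (show pq m (j'+2)+1 ≤ d by omega)
          rwa [add_one_mul] at this
        omega
      have hmax : d = pq m (j'+2) → rem < ostq m j' := by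
        intro h
        have h2 : d * ostq m (j'+1) = pq m (j'+2) * ostq m (j'+1) := by rw [h]
        omega
      refine ⟨Function.update ε' (j'+1) d, ⟨⟨?_, ?_⟩, max K' (j'+2), ?_, ?_⟩, ?_⟩
      · rw [Function.update_of_ne (by omega)]
        exact hM'.1
      · intro i hi
        rcases eq_or_ne i (j'+1) with rfl | hne
        · rw [Function.update_self]
          refine ⟨by simpa using hdle, fun h => ?_⟩
          have hr := hmax (by simpa using h)
          show Function.update ε' (j'+1) d j' = 0
          rw [Function.update_of_ne (by omega)]
          by_contra hne0
          have := hsupp' j' hne0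
          omega
        · rw [Function.update_of_ne hne]
          rcases Nat.lt_or_ge i (j'+1) with hlt | hge
          · have h2 : Function.update ε' (j'+1) d (i-1) = ε' (i-1) :=
              Function.update_of_ne (by omega) _ _
            rw [h2]
            exact hM'.2 i hi
          · have h0 : ε' i = 0 := by
              by_contra hcc; have := hsupp'' i hcc; omega
            rw [h0]
            refine ⟨Nat.zero_le _, fun h => ?_⟩
            have := pq_pos m hm (i+1)
            omega
      · intro i hi
        rw [Function.update_of_ne (by omega)]
        exact hK' i (by omega)
      · have hKK : K' ≤ max K' (j'+2) := le_max_left _ _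
        have hj_mem : j'+1 ∈ range (max K' (j'+2)) := Finset.mem_range.2 (by omega)
        have hsum'' : rem = ∑ i ∈ range (max K' (j'+2)), ε' i * ostq m i := by
          rw [hsum']
          exact Finset.sum_subset (Finset.range_subset_range.2 hKK) (fun x _ hx => by
            rw [hK' x (le_of_not_gt (fun hc => hx (Finset.mem_range.2 hc)))]
            exact zero_mul _)
        rw [← Finset.add_sum_erase _ (fun i => Function.update ε' (j'+1) d i * ostq m i) hj_mem]
        rw [Function.update_self]
        have herase : ∑ i ∈ (range (max K' (j'+2))).erase (j'+1),
            Function.update ε' (j'+1) d i * ostq m i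
            = ∑ i ∈ (range (max K' (j'+2))).erase (j'+1), ε' i * ostq m i :=
          Finset.sum_congr rfl (fun x hx => by
            rw [Function.update_of_ne (Finset.ne_of_mem_erase hx)])
        rw [herase]
        have hsplit : ε' (j'+1) * ostq m (j'+1) +
            ∑ i ∈ (range (max K' (j'+2))).erase (j'+1), ε' i * ostq m i
            = ∑ i ∈ range (max K' (j'+2)), ε' i * ostq m i :=
          Finset.add_sum_erase _ (fun i => ε' i * ostq m i) hj_mem
        rw [hεj0, zero_mul] at hsplit
        omega
      · intro i hi
        rcases eq_or_ne i (j'+1) with rfl | hne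
        · exact hjn
        · rw [Function.update_of_ne hne] at hi
          exact le_trans (hsupp' i hi) hrem_n.le

lemma markov_sum_unique (m : ℕ) (hm : 2 ≤ m) :
    ∀ L (ε ε' : ℕ → ℕ), Markov m ε → Markov m ε' →
      ∑ i ∈ range L, ε i * ostq m i = ∑ i ∈ range L, ε' i * ostq m i →
      ∀ i, i < L → ε i = ε' i := by
  intro L
  induction L with
  | zero => intro ε ε' _ _ _ i hi; omega
  | succ L ih =>
    intro ε ε' hε hε' hsum i hi
    have key : ∀ (a b : ℕ → ℕ), Markov m a → Markov m b →
        ∑ i ∈ range (L+1), a i * ostq m i = ∑ i ∈ range (L+1), b i * ostq m i →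
        ¬ (b L < a L) := by
      intro a b ha hb hs hlt
      have h1 : ∑ i ∈ range L, b i * ostq m i < ostq m L := head_lt m hm b hb L
      have h2 : (b L + 1) * ostq m L ≤ a L * ostq m L :=
        Nat.mul_le_mul_right _ (by omega)
      rw [add_one_mul] at h2
      rw [Finset.sum_range_succ, Finset.sum_range_succ] at hs
      omega
    have htop : ε L = ε' L := by
      rcases Nat.lt_trichotomy (ε L) (ε' L) with h | h | h
      · exact absurd h (key ε' ε hε' hε hsum.symm)
      · exact h
      · exact absurd h (key ε ε' hε hε' hsum)
    rcases Nat.lt_or_ge i L with hiL | hiL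
    · apply ih ε ε' hε hε' _ i hiL
      rw [Finset.sum_range_succ, Finset.sum_range_succ, htop] at hsum
      omega
    · have : i = L := by omega
      rw [this]; exact htop

lemma rep_unique (m : ℕ) (hm : 2 ≤ m) {n : ℕ} {ε ε' : ℕ → ℕ}
    (h : IsOstRep m n ε) (h' : IsOstRep m n ε') : ε = ε' := by
  obtain ⟨hM, K, hK, hsum⟩ := h
  obtain ⟨hM', K', hK', hsum'⟩ := h'
  set L := max K K' with hL
  have hsumL : ∑ i ∈ range L, ε i * ostq m i = ∑ i ∈ range L, ε' i * ostq m i := by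
    have e1 : n = ∑ i ∈ range L, ε i * ostq m i := by
      rw [hsum]
      exact Finset.sum_subset (Finset.range_subset_range.2 (le_max_left _ _)) (fun x _ hx => by
        rw [hK x (le_of_not_gt (fun hc => hx (Finset.mem_range.2 hc)))]; exact zero_mul _)
    have e2 : n = ∑ i ∈ range L, ε' i * ostq m i := by
      rw [hsum']
      exact Finset.sum_subset (Finset.range_subset_range.2 (le_max_right _ _)) (fun x _ hx => by
        rw [hK' x (le_of_not_gt (fun hc => hx (Finset.mem_range.2 hc)))]; exact zero_mul _)
    omega
  funext i
  rcases Nat.lt_or_ge i L with hi | hi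
  · exact markov_sum_unique m hm L ε ε' hM hM' hsumL i hi
  · rw [hK i (by omega), hK' i (by omega)]

/-- The Ostrowski digits of n. -/
noncomputable def ostEps (m n : ℕ) : ℕ → ℕ :=
  if h : ∃ ε, IsOstRep m n ε then h.choose else fun _ => 0

lemma ostEps_eq (m : ℕ) (hm : 2 ≤ m) {n : ℕ} {ε : ℕ → ℕ} (h : IsOstRep m n ε) :
    ostEps m n = ε := by
  have hex : ∃ ε, IsOstRep m n ε := ⟨ε, h⟩
  rw [ostEps, dif_pos hex]
  exact rep_unique m hm hex.choose_spec h

lemma ostEps_isRep (m : ℕ) (hm : 2 ≤ m) (n : ℕ) : IsOstRep m n (ostEps m n) := by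
  obtain ⟨ε, h1, _⟩ := exists_rep m hm n
  rw [ostEps_eq m hm h1]; exact h1

lemma ostEps_supp (m : ℕ) (hm : 2 ≤ m) (n i : ℕ) (h : ostEps m n i ≠ 0) : ostq m i ≤ n := by
  obtain ⟨ε, h1, h2⟩ := exists_rep m hm n
  rw [ostEps_eq m hm h1] at h
  exact h2 i h

lemma ostEps_markov (m : ℕ) (hm : 2 ≤ m) (n : ℕ) : Markov m (ostEps m n) :=
  (ostEps_isRep m hm n).1

/-- sum over any range past a support bound gives n -/
lemma rep_sum_range (m : ℕ) (hm : 2 ≤ m) (n K : ℕ)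
    (hK : ∀ i, K ≤ i → ostEps m n i = 0) :
    n = ∑ i ∈ range K, ostEps m n i * ostq m i := by
  obtain ⟨_, K0, hK0, hsum⟩ := ostEps_isRep m hm n
  set L := max K K0 with hL
  have e1 : n = ∑ i ∈ range L, ostEps m n i * ostq m i := by
    refine hsum.trans ?_
    exact Finset.sum_subset (Finset.range_subset_range.2 (le_max_right _ _)) (fun x _ hx => by
      rw [hK0 x (le_of_not_gt (fun hc => hx (Finset.mem_range.2 hc)))]; exact zero_mul _)
  refine e1.trans ?_
  exact (Finset.sum_subset (Finset.range_subset_range.2 (le_max_left _ _)) (fun x _ hx => by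
      rw [hK x (le_of_not_gt (fun hc => hx (Finset.mem_range.2 hc)))]; exact zero_mul _)).symm

lemma ostEps_bound (m : ℕ) (hm : 2 ≤ m) (n : ℕ) : ∃ K, ∀ i, K ≤ i → ostEps m n i = 0 :=
  ⟨(ostEps_isRep m hm n).2.choose, (ostEps_isRep m hm n).2.choose_spec.1⟩

/-- Ostrowski sum-of-digits function S_α. -/
noncomputable def Sfull (m n : ℕ) : ℕ := ∑ᶠ i, ostEps m n i

/-- Truncated Ostrowski sum-of-digits function S_{α,k}. -/
noncomputable def Strunc (m k n : ℕ) : ℕ := ∑ i ∈ Finset.range k, ostEps m n i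

lemma Sfull_eq (m : ℕ) (hm : 2 ≤ m) (n K : ℕ) (hK : ∀ i, K ≤ i → ostEps m n i = 0) :
    Sfull m n = ∑ i ∈ range K, ostEps m n i := by
  apply finsum_eq_sum_of_support_subset
  intro x hx
  simp only [Function.mem_support] at hx
  exact Finset.mem_coe.2 (Finset.mem_range.2 (by by_contra h; exact hx (hK x (by omega))))

noncomputable def Hd (m k n : ℕ) : ℕ := ∑ i ∈ range k, ostEps m n i * ostq m i
noncomputable def tl (m k n : ℕ) : ℕ := n - Hd m k n
noncomputable def Mlen (m k v : ℕ) : ℕ :=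
  if ostEps m v k = pq m (k+1) then ostq m (k-1) else ostq m k

lemma interval_lemma (m : ℕ) (hm : 2 ≤ m) (k : ℕ) (hk : 2 ≤ k) (n : ℕ) :
    tl m k n ≤ n ∧ n < tl m k n + Mlen m k (tl m k n) ∧
    ∀ x, tl m k n ≤ x → x < tl m k n + Mlen m k (tl m k n) →
      (∀ i, k ≤ i → ostEps m x i = ostEps m n i) ∧ tl m k x = tl m k n := by
  obtain ⟨K, hK⟩ := ostEps_bound m hm n
  set ε := ostEps m n with hε
  set K' := max K k with hK'
  have hKK' : ∀ i, K' ≤ i → ε i = 0 := fun i hi => hK i (by omega)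
  have hsum' : n = ∑ i ∈ range K', ε i * ostq m i := rep_sum_range m hm n K' hKK'
  have hsplit : ∑ i ∈ range k, ε i * ostq m i + ∑ i ∈ Ico k K', ε i * ostq m i
      = ∑ i ∈ range K', ε i * ostq m i := by
    rw [Finset.range_eq_Ico, Finset.range_eq_Ico]
    exact Finset.sum_Ico_consecutive _ (Nat.zero_le _) (le_max_right _ _)
  have hHd : Hd m k n = ∑ i ∈ range k, ε i * ostq m i := rfl
  have hHd_le : Hd m k n ≤ n := by rw [hHd, hsum']; omega
  have htl : tl m k n + Hd m k n = n := by
    show n - Hd m k n + Hd m k n = n; omega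
  have hv : tl m k n = ∑ i ∈ Ico k K', ε i * ostq m i := by
    have : tl m k n = n - Hd m k n := rfl
    omega
  set L := if ε k = pq m (k+1) then ostq m (k-1) else ostq m k with hLdef
  have hLk : L ≤ ostq m k := by
    rw [hLdef]; split
    · exact ostq_mono m hm (by omega)
    · exact le_refl _
  have hLpos : 0 < L := by
    rw [hLdef]; split <;> exact ostq_pos m _
  have hMε : Markov m ε := ostEps_markov m hm n
  -- core claim
  have core : ∀ x, x < L →
      ostEps m (tl m k n + x) = fun i => if i < k then ostEps m x i else ε i := by
    intro x hx
    set δ := ostEps m x with hδ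
    have hδsupp : ∀ i, δ i ≠ 0 → i < k := by
      intro i hi
      by_contra h
      push_neg at h
      have h1 := ostEps_supp m hm x i hi
      have h2 := ostq_mono m hm h
      omega
    have hδ0 : ∀ i, k ≤ i → δ i = 0 := by
      intro i hi; by_contra h; have := hδsupp i h; omega
    have hxsum : x = ∑ i ∈ range k, δ i * ostq m i := rep_sum_range m hm x k hδ0
    have hδk1 : ε k = pq m (k+1) → δ (k-1) = 0 := by
      intro h
      rw [hLdef, if_pos h] at hx
      by_contra hne
      have := ostEps_supp m hm x (k-1) hne
      omega
    have hMδ : Markov m δ := ostEps_markov m hm x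
    apply ostEps_eq m hm
    refine ⟨⟨?_, ?_⟩, K', ?_, ?_⟩
    · show (if 0 < k then δ 0 else ε 0) < pq m 1
      rw [if_pos (by omega : 0 < k)]
      exact hMδ.1
    · intro i hi
      show (if i < k then δ i else ε i) ≤ pq m (i+1) ∧
        ((if i < k then δ i else ε i) = pq m (i+1) → (if i - 1 < k then δ (i-1) else ε (i-1)) = 0)
      rcases Nat.lt_trichotomy i k with hik | rfl | hik
      · rw [if_pos hik, if_pos (by omega : i - 1 < k)]
        exact hMδ.2 i hi
      · rw [if_neg (lt_irrefl i), if_pos (by omega : i - 1 < i)]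
        exact ⟨(hMε.2 i hi).1, fun h => hδk1 h⟩
      · rw [if_neg (by omega : ¬ i < k), if_neg (by omega : ¬ i - 1 < k)]
        exact hMε.2 i hi
    · intro i hi
      show (if i < k then δ i else ε i) = 0
      rw [if_neg (by omega : ¬ i < k)]
      exact hKK' i hi
    · show tl m k n + x = ∑ i ∈ range K', (if i < k then δ i else ε i) * ostq m i
      have h1 : ∑ i ∈ Ico 0 k, (if i < k then δ i else ε i) * ostq m i
          = ∑ i ∈ range k, δ i * ostq m i := by
        rw [Finset.range_eq_Ico]
        exact Finset.sum_congr rfl (fun i hi => by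
          rw [if_pos (Finset.mem_Ico.1 hi).2])
      have h2 : ∑ i ∈ Ico k K', (if i < k then δ i else ε i) * ostq m i
          = ∑ i ∈ Ico k K', ε i * ostq m i :=
        Finset.sum_congr rfl (fun i hi => by
          rw [if_neg (by have := (Finset.mem_Ico.1 hi).1; omega)])
      have h3 : ∑ i ∈ Ico 0 k, (if i < k then δ i else ε i) * ostq m i
          + ∑ i ∈ Ico k K', (if i < k then δ i else ε i) * ostq m i
          = ∑ i ∈ Ico 0 K', (if i < k then δ i else ε i) * ostq m i :=
        Finset.sum_Ico_consecutive _ (Nat.zero_le _) (le_max_right _ _)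
      rw [Finset.range_eq_Ico, ← h3, h1, h2]
      omega
  -- identify Mlen at tl
  have htl_digits : ostEps m (tl m k n) = fun i => if i < k then ostEps m 0 i else ε i := by
    have := core 0 hLpos
    simpa using this
  have hMlen : Mlen m k (tl m k n) = L := by
    show (if ostEps m (tl m k n) k = pq m (k+1) then ostq m (k-1) else ostq m k) = L
    rw [htl_digits]
    show (if (if k < k then ostEps m 0 k else ε k) = pq m (k+1)
      then ostq m (k-1) else ostq m k) = L
    rw [if_neg (lt_irrefl k)]
  -- Hd < L
  have hHdL : Hd m k n < L := by
    rw [hLdef]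
    split
    · rename_i h
      have h0 : ε (k-1) = 0 := (hMε.2 k (by omega)).2 h
      have hlt := head_lt m hm ε hMε (k-1)
      rw [hHd]
      obtain ⟨k', rfl⟩ : ∃ k', k = k' + 1 := ⟨k - 1, by omega⟩
      rw [Finset.sum_range_succ]
      simp only [Nat.add_sub_cancel] at h0 hlt ⊢
      rw [h0, zero_mul]
      omega
    · rw [hHd]; exact head_lt m hm ε hMε k
  refine ⟨by omega, by rw [hMlen]; omega, ?_⟩
  intro x hx1 hx2
  rw [hMlen] at hx2
  obtain ⟨y, rfl⟩ : ∃ y, x = tl m k n + y := ⟨x - tl m k n, by omega⟩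
  have hyL : y < L := by omega
  have hcy := core y hyL
  constructor
  · intro i hi
    rw [hcy]
    show (if i < k then ostEps m y i else ε i) = ε i
    rw [if_neg (by omega : ¬ i < k)]
  · have hysum : y = ∑ i ∈ range k, ostEps m y i * ostq m i := by
      apply rep_sum_range m hm y k
      intro i hi
      by_contra h
      have h1 := ostEps_supp m hm y i h
      have h2 := ostq_mono m hm hi
      omega
    have hHdx : Hd m k (tl m k n + y) = y := by
      show ∑ i ∈ range k, ostEps m (tl m k n + y) i * ostq m i = y
      rw [hcy]
      refine Eq.trans ?_ hysum.symm
      refine Finset.sum_congr rfl (fun i hi => ?_)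
      show (if i < k then ostEps m y i else ε i) * ostq m i = ostEps m y i * ostq m i
      rw [if_pos (Finset.mem_range.1 hi)]
    show tl m k n + y - Hd m k (tl m k n + y) = tl m k n
    rw [hHdx]
    omega

lemma Mlen_ge (m : ℕ) (hm : 2 ≤ m) (k v : ℕ) : ostq m (k-1) ≤ Mlen m k v := by
  show ostq m (k-1) ≤ if ostEps m v k = pq m (k+1) then ostq m (k-1) else ostq m k
  split
  · exact le_refl _
  · exact ostq_mono m hm (by omega)

lemma T_eq (m : ℕ) (hm : 2 ≤ m) (k : ℕ) {x n : ℕ}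
    (h : ∀ i, k ≤ i → ostEps m x i = ostEps m n i) :
    (Sfull m x : ℤ) - Strunc m k x = (Sfull m n : ℤ) - Strunc m k n := by
  obtain ⟨Kx, hKx⟩ := ostEps_bound m hm x
  obtain ⟨Kn, hKn⟩ := ostEps_bound m hm n
  set K := max (max Kx Kn) k with hK
  have hSx : Sfull m x = ∑ i ∈ range K, ostEps m x i :=
    Sfull_eq m hm x K (fun i hi => hKx i (by omega))
  have hSn : Sfull m n = ∑ i ∈ range K, ostEps m n i :=
    Sfull_eq m hm n K (fun i hi => hKn i (by omega))
  have hsx : Strunc m k x + ∑ i ∈ Ico k K, ostEps m x i = Sfull m x := by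
    rw [hSx]
    show ∑ i ∈ range k, ostEps m x i + _ = _
    rw [Finset.range_eq_Ico, Finset.range_eq_Ico]
    exact Finset.sum_Ico_consecutive _ (Nat.zero_le _) (by omega)
  have hsn : Strunc m k n + ∑ i ∈ Ico k K, ostEps m n i = Sfull m n := by
    rw [hSn]
    show ∑ i ∈ range k, ostEps m n i + _ = _
    rw [Finset.range_eq_Ico, Finset.range_eq_Ico]
    exact Finset.sum_Ico_consecutive _ (Nat.zero_le _) (by omega)
  have hmid : ∑ i ∈ Ico k K, ostEps m x i = ∑ i ∈ Ico k K, ostEps m n i :=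
    Finset.sum_congr rfl (fun i hi => h i (Finset.mem_Ico.1 hi).1)
  rw [hmid] at hsx
  omega

/-- Distance to the nearest integer. -/
noncomputable def nint (x : ℝ) : ℝ := |x - round x|

theorem stmt11 (m : ℕ) (hm : 2 ≤ m) (N k r : ℕ) (hk : 2 ≤ k) :
    (((Finset.range N).filter (fun n =>
        (Sfull m (n + r) : ℤ) - (Sfull m n : ℤ) ≠
          (Strunc m k (n + r) : ℤ) - (Strunc m k n : ℤ))).card : ℝ)
      ≤ (N : ℝ) * r / (ostq m (k - 1) : ℝ) := by
  classical
  set Q := ostq m (k-1) with hQdef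
  have hQpos : 0 < Q := ostq_pos m _
  set B := (Finset.range N).filter (fun n =>
        (Sfull m (n + r) : ℤ) - (Sfull m n : ℤ) ≠
          (Strunc m k (n + r) : ℤ) - (Strunc m k n : ℤ)) with hBdef
  have hmem : ∀ n ∈ B, tl m k n ≤ n ∧ n < N ∧ n < tl m k n + Mlen m k (tl m k n) ∧
      tl m k n + Mlen m k (tl m k n) ≤ n + r := by
    intro n hn
    obtain ⟨h1, h2, h3⟩ := interval_lemma m hm k hk n
    have hnN : n < N := Finset.mem_range.1 (Finset.mem_filter.1 hn).1
    refine ⟨h1, hnN, h2, ?_⟩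
    by_contra hcon
    push_neg at hcon
    have hdig := (h3 (n+r) (by omega) hcon).1
    have := T_eq m hm k hdig
    exact (Finset.mem_filter.1 hn).2 (by omega)
  set V := B.image (fun n => tl m k n) with hVdef
  have hcard : B.card = ∑ v ∈ V, (B.filter (fun n => tl m k n = v)).card :=
    Finset.card_eq_sum_card_fiberwise (fun x hx => Finset.mem_image_of_mem _ hx)
  have hV : ∀ v ∈ V, v < N ∧ Q ≤ Mlen m k v ∧
      (∀ x, v ≤ x → x < v + Mlen m k v → tl m k x = v) := by
    intro v hv
    obtain ⟨n0, hn0B, hn0p⟩ := Finset.mem_image.1 hv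
    have hn0 : tl m k n0 = v := hn0p
    obtain ⟨h1, h2, h3⟩ := interval_lemma m hm k hk n0
    obtain ⟨g1, g2, _, _⟩ := hmem n0 hn0B
    rw [hn0] at h1 h2 h3
    exact ⟨by omega, Mlen_ge m hm k v, fun x hx1 hx2 => by
      exact (h3 x hx1 hx2).2⟩
  -- fiber bound (ℕ)
  have hfib : ∀ v ∈ V, (B.filter (fun n => tl m k n = v)).card ≤
      min N (v + Mlen m k v) - max v (v + Mlen m k v - r) := by
    intro v hv
    have hsub : B.filter (fun n => tl m k n = v) ⊆
        Ico (max v (v + Mlen m k v - r)) (min N (v + Mlen m k v)) := by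
      intro n hn
      obtain ⟨hnB, hnv⟩ := Finset.mem_filter.1 hn
      obtain ⟨g1, g2, g3, g4⟩ := hmem n hnB
      rw [hnv] at g1 g3 g4
      simp only [Finset.mem_Ico]
      omega
    calc (B.filter (fun n => tl m k n = v)).card ≤ _ := Finset.card_le_card hsub
      _ = _ := Nat.card_Ico _ _
  -- disjointness of clipped intervals
  have hdisj : ∀ v ∈ V, ∀ w ∈ V, v ≠ w →
      Disjoint (Ico v (min N (v + Mlen m k v))) (Ico w (min N (w + Mlen m k w))) := by
    intro v hv w hw hvw
    rw [Finset.disjoint_left]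
    intro x hx1 hx2
    rw [Finset.mem_Ico] at hx1 hx2
    have e1 : tl m k x = v := (hV v hv).2.2 x hx1.1 (by omega)
    have e2 : tl m k x = w := (hV w hw).2.2 x hx2.1 (by omega)
    omega
  have hsumc : ∑ v ∈ V, (min N (v + Mlen m k v) - v) ≤ N := by
    have h1 : ∀ v ∈ V, (Ico v (min N (v + Mlen m k v))).card
        = min N (v + Mlen m k v) - v := fun v _ => Nat.card_Ico _ _
    rw [← Finset.sum_congr rfl h1, ← Finset.card_biUnion hdisj]
    calc _ ≤ (range N).card := Finset.card_le_card (by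
        intro x hx
        obtain ⟨v, hv, hxv⟩ := Finset.mem_biUnion.1 hx
        rw [Finset.mem_Ico] at hxv
        exact Finset.mem_range.2 (by omega))
      _ = N := Finset.card_range N
  -- per-fiber real bound
  have hkey : ∀ v ∈ V, ((B.filter (fun n => tl m k n = v)).card : ℝ) ≤
      (r : ℝ) * ((min N (v + Mlen m k v) - v : ℕ) : ℝ) / Q := by
    intro v hv
    obtain ⟨hvN, hQL, _⟩ := hV v hv
    set L := Mlen m k v with hLdef
    have hnat : Q * (min N (v + L) - max v (v + L - r)) ≤ r * (min N (v + L) - v) := by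
      rcases le_or_gt Q r with hQr | hrQ
      · have b1 : min N (v + L) - max v (v + L - r) ≤ min N (v + L) - v := by omega
        calc Q * (min N (v + L) - max v (v + L - r)) ≤ Q * (min N (v + L) - v) :=
              Nat.mul_le_mul_left _ b1
          _ ≤ r * (min N (v + L) - v) := Nat.mul_le_mul_right _ hQr
      · have hmaxeq : max v (v + L - r) = v + L - r := by omega
        rw [hmaxeq]
        rcases le_or_gt (min N (v + L)) (v + L - r) with hle | hgt
        · have : min N (v + L) - (v + L - r) = 0 := by omega
          rw [this, Nat.mul_zero]
          exact Nat.zero_le _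
        · set W := min N (v + L) with hW
          have hWv : v ≤ W := by omega
          have hWL : W ≤ v + L := by omega
          have e1 : W - (v + L - r) = (W - v) - (L - r) := by omega
          rw [e1]
          set x := W - v with hx
          have hxL : x ≤ L := by omega
          have hLr : L - r ≤ x := by omega
          zify [hLr, hxL, (by omega : r ≤ L)]
          have c1 : ((Q:ℤ) - r) * x ≤ ((Q:ℤ) - r) * L := by
            apply mul_le_mul_of_nonneg_left _ (by omega)
            exact_mod_cast hxL
          have c2 : (r:ℤ) * Q ≤ (r:ℤ) * L := by
            apply mul_le_mul_of_nonneg_left _ (by omega)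
            exact_mod_cast hQL
          nlinarith
    have hfb := hfib v hv
    rw [le_div_iff₀ (by exact_mod_cast hQpos : (0:ℝ) < (Q:ℝ))]
    have h2 : (B.filter (fun n => tl m k n = v)).card * Q ≤ r * (min N (v + L) - v) := by
      calc (B.filter (fun n => tl m k n = v)).card * Q
          ≤ (min N (v + L) - max v (v + L - r)) * Q := Nat.mul_le_mul_right _ hfb
        _ = Q * (min N (v + L) - max v (v + L - r)) := Nat.mul_comm _ _
        _ ≤ r * (min N (v + L) - v) := hnat
    exact_mod_cast h2
  have hQR : (0:ℝ) < Q := by exact_mod_cast hQpos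
  calc (B.card : ℝ) = ∑ v ∈ V, ((B.filter (fun n => tl m k n = v)).card : ℝ) := by
        rw [hcard]; push_cast; rfl
    _ ≤ ∑ v ∈ V, (r : ℝ) * ((min N (v + Mlen m k v) - v : ℕ) : ℝ) / Q :=
        Finset.sum_le_sum hkey
    _ = (r : ℝ) / Q * ∑ v ∈ V, ((min N (v + Mlen m k v) - v : ℕ) : ℝ) := by
        rw [Finset.mul_sum]
        exact Finset.sum_congr rfl (fun v _ => by ring)
    _ ≤ (r : ℝ) / Q * N := by
        apply mul_le_mul_of_nonneg_left _ (by positivity)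
        calc ∑ v ∈ V, ((min N (v + Mlen m k v) - v : ℕ) : ℝ)
            = ((∑ v ∈ V, (min N (v + Mlen m k v) - v) : ℕ) : ℝ) := by push_cast; rfl
          _ ≤ (N:ℝ) := by exact_mod_cast hsumc
    _ = (N:ℝ) * r / Q := by ring
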